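/- Let F be a finitely generated group and H̄ ≤ F a subgroup of finite index. Then the subgroup Ψ_H = {ψ ∈ Aut(F) : ψ(x)H̄ = xH̄ for all x ∈ F} has finite index in Aut(F). -/

import Mathlib

/-- The subgroup of automorphisms moving every element within its left `H`-coset. -/
def psiSubgroup (F : Type) [Group F] (H : Subgroup F) : Subgroup (MulAut F) where
  carrier := {ψ : MulAut F | ∀ x : F, x⁻¹ * ψ x ∈ H}
  one_mem' := by intro x; simpa using H.one_mem
  mul_mem' := by
    intro ψ φ hψ hφ x
    have : x⁻¹ * ψ (φ x) = (x⁻¹ * φ x) * ((φ x)⁻¹ * ψ (φ x)) := by group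
    show x⁻¹ * ψ (φ x) ∈ H
    rw [this]; exact mul_mem (hφ x) (hψ (φ x))
  inv_mem' := by
    intro ψ hψ x
    have h := hψ (ψ⁻¹ x)
    rw [MulAut.apply_inv_self] at h
    simpa using inv_mem h

theorem finite_monoidHom (F Q : Type) [Group F] [Group Q] (hFG : Group.FG F) [Finite Q] :
    Finite (F →* Q) := by
  obtain ⟨S, hS, hSfin⟩ := Group.fg_iff.mp hFG
  haveI := hSfin.to_subtype
  refine Finite.of_injective (fun f : F →* Q => fun x : S => f x) ?_
  intro f g h
  refine MonoidHom.eq_of_eqOn_dense hS ?_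
  intro x hx
  exact congrFun h ⟨x, hx⟩

/-- Let `F` be a finitely generated group and `H̄ ≤ F` a subgroup of finite index. Then the
subgroup `Ψ_H = {ψ ∈ Aut F : ψ(x)H̄ = xH̄ for all x}` has finite index in `Aut F`. -/
theorem psiH_finiteIndex (F : Type) [Group F] (hFG : Group.FG F) (H : Subgroup F)
    (hH : H.FiniteIndex) :
    ∃ S : Subgroup (MulAut F),
      (S : Set (MulAut F)) = {ψ : MulAut F | ∀ x : F, x⁻¹ * ψ x ∈ H} ∧ S.FiniteIndex := by
  refine ⟨psiSubgroup F H, rfl, ?_⟩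
  set N := H.normalCore with hN
  haveI : N.FiniteIndex := Subgroup.finiteIndex_normalCore H
  haveI : Finite (F ⧸ N) := Subgroup.finite_quotient_of_finiteIndex (H := N)
  haveI : Finite (F →* F ⧸ N) := finite_monoidHom F (F ⧸ N) hFG
  -- the subgroup for the normal core
  have hle : psiSubgroup F N ≤ psiSubgroup F H := fun ψ hψ x =>
    H.normalCore_le (hψ x)
  haveI : (psiSubgroup F N).FiniteIndex := by
    set K := psiSubgroup F N with hK
    let π : F →* F ⧸ N := QuotientGroup.mk' N
    let f : MulAut F ⧸ K → (F →* F ⧸ N) := by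
      refine Quotient.lift (fun ψ : MulAut F => π.comp (ψ⁻¹ : MulAut F).toMonoidHom) ?_
      intro ψ φ hrel
      have hmem : ψ⁻¹ * φ ∈ K := QuotientGroup.leftRel_apply.mp hrel
      ext y
      have h := hmem (φ⁻¹ y)
      have h2 : (φ⁻¹ y)⁻¹ * ψ⁻¹ y ∈ N := by
        simpa [MulAut.apply_inv_self] using h
      simpa [π] using ((QuotientGroup.eq (s := N)).mpr h2).symm
    have hfin : Finite (MulAut F ⧸ K) := by
      refine Finite.of_injective f ?_
      intro a b
      induction a using Quotient.inductionOn with | _ ψ =>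
      induction b using Quotient.inductionOn with | _ φ =>
      intro h
      apply Quotient.sound
      refine QuotientGroup.leftRel_apply.mpr ?_
      intro x
      have hx := congrArg (fun g : F →* F ⧸ N => g (φ x)) h
      simp only [f, Quotient.lift_mk, MonoidHom.comp_apply, MulEquiv.coe_toMonoidHom] at hx
      rw [show (φ⁻¹ : MulAut F) (φ x) = x from MulAut.inv_apply_self F φ x] at hx
      have : x⁻¹ * ψ⁻¹ (φ x) ∈ N := (QuotientGroup.eq (s := N)).mp hx.symm
      simpa using this
    exact @Subgroup.finiteIndex_of_finite_quotient _ _ K hfin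
  exact Subgroup.finiteIndex_of_le hle
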